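/- Let ρ, u, Π be C² fields on ℝ₊ × ℝ², with u ℝ²-valued, satisfying ∂_t ρ + u·∇ρ = 0, ρ(∂_t u + u·∇u) + ∇Π = 0 and div u = 0, with ρ > 0. Define the momentum m := ρu and η := curl m = ∂₁m² − ∂₂m¹, and X := ∇^⊥ρ. Then η satisfies the transport equation ∂_t η + u·∇η = ∂_X u · u, with right-hand side equal to (1/2)∂_X|u|². -/

import Mathlib

/-- Time derivative ∂_t. -/
noncomputable def pt (f : ℝ → ℝ → ℝ → ℝ) (t x y : ℝ) : ℝ := deriv (fun s => f s x y) t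
/-- Spatial derivative ∂₁. -/
noncomputable def p1 (f : ℝ → ℝ → ℝ → ℝ) (t x y : ℝ) : ℝ := deriv (fun s => f t s y) x
/-- Spatial derivative ∂₂. -/
noncomputable def p2 (f : ℝ → ℝ → ℝ → ℝ) (t x y : ℝ) : ℝ := deriv (fun s => f t x s) y

abbrev E3 : Type := ℝ × ℝ × ℝ

def e0 : E3 := (1, 0, 0)
def e1 : E3 := (0, 1, 0)
def e2 : E3 := (0, 0, 1)

lemma hasD_t (G : E3 → ℝ) {t x y : ℝ} (hG : DifferentiableAt ℝ G (t, x, y)) :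
    HasDerivAt (fun s => G (s, x, y)) (fderiv ℝ G (t, x, y) e0) t := by
  have h1 : HasDerivAt (fun s : ℝ => ((s, x, y) : E3)) e0 t := by
    have := (hasDerivAt_id t).prodMk (hasDerivAt_const t ((x, y) : ℝ × ℝ))
    exact this
  exact (hG.hasFDerivAt.comp_hasDerivAt t h1)

lemma hasD_x (G : E3 → ℝ) {t x y : ℝ} (hG : DifferentiableAt ℝ G (t, x, y)) :
    HasDerivAt (fun s => G (t, s, y)) (fderiv ℝ G (t, x, y) e1) x := by
  have h1 : HasDerivAt (fun s : ℝ => ((t, s, y) : E3)) e1 x := by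
    have := (hasDerivAt_const x t).prodMk ((hasDerivAt_id x).prodMk (hasDerivAt_const x y))
    simpa [e1, Prod.mk.injEq] using this
  exact (hG.hasFDerivAt.comp_hasDerivAt x h1)

lemma hasD_y (G : E3 → ℝ) {t x y : ℝ} (hG : DifferentiableAt ℝ G (t, x, y)) :
    HasDerivAt (fun s => G (t, x, s)) (fderiv ℝ G (t, x, y) e2) y := by
  have h1 : HasDerivAt (fun s : ℝ => ((t, x, s) : E3)) e2 y := by
    have := (hasDerivAt_const y t).prodMk ((hasDerivAt_const y x).prodMk (hasDerivAt_id y))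
    simpa [e2, Prod.mk.injEq] using this
  exact (hG.hasFDerivAt.comp_hasDerivAt y h1)

/-- uncurry -/
def UC (f : ℝ → ℝ → ℝ → ℝ) : E3 → ℝ := fun p => f p.1 p.2.1 p.2.2

/-- second derivative value -/
noncomputable def DD (f : ℝ → ℝ → ℝ → ℝ) (v w : E3) (t x y : ℝ) : ℝ :=
  fderiv ℝ (fderiv ℝ (UC f)) (t, x, y) v w

lemma DD_symm {f : ℝ → ℝ → ℝ → ℝ} (hf : ContDiff ℝ 2 (UC f)) (v w : E3) (t x y : ℝ) :
    DD f v w t x y = DD f w v t x y := by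
  have hd : ∀ q, HasFDerivAt (UC f) (fderiv ℝ (UC f) q) q := fun q =>
    ((hf.differentiable (by norm_num)) q).hasFDerivAt
  have h2 : ContDiff ℝ 1 (fderiv ℝ (UC f)) := hf.fderiv_right (by norm_num)
  have hx : HasFDerivAt (fderiv ℝ (UC f)) (fderiv ℝ (fderiv ℝ (UC f)) (t, x, y)) (t, x, y) :=
    ((h2.differentiable (by norm_num)) _).hasFDerivAt
  exact second_derivative_symmetric hd hx v w

/-- the first-derivative field in direction v, as a function on E3 -/
noncomputable def DV (f : ℝ → ℝ → ℝ → ℝ) (v : E3) : E3 → ℝ :=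
  fun p => fderiv ℝ (UC f) p v

lemma DV_differentiable {f : ℝ → ℝ → ℝ → ℝ} (hf : ContDiff ℝ 2 (UC f)) (v : E3) :
    Differentiable ℝ (DV f v) := by
  have h2 : ContDiff ℝ 1 (fderiv ℝ (UC f)) := hf.fderiv_right (by norm_num)
  have : ContDiff ℝ 1 (DV f v) :=
    (ContinuousLinearMap.apply ℝ ℝ v).contDiff.comp h2
  exact this.differentiable (by norm_num)

lemma fderiv_DV {f : ℝ → ℝ → ℝ → ℝ} (hf : ContDiff ℝ 2 (UC f)) (v w : E3) (t x y : ℝ) :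
    fderiv ℝ (DV f v) (t, x, y) w = DD f w v t x y := by
  have h2 : ContDiff ℝ 1 (fderiv ℝ (UC f)) := hf.fderiv_right (by norm_num)
  have hx : HasFDerivAt (fderiv ℝ (UC f)) (fderiv ℝ (fderiv ℝ (UC f)) (t, x, y)) (t, x, y) :=
    ((h2.differentiable (by norm_num)) _).hasFDerivAt
  have : HasFDerivAt (DV f v)
      (((ContinuousLinearMap.apply ℝ ℝ v)).comp (fderiv ℝ (fderiv ℝ (UC f)) (t, x, y)))
      (t, x, y) := (ContinuousLinearMap.apply ℝ ℝ v).hasFDerivAt.comp _ hx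
  rw [this.fderiv]
  rfl

/-- p1 f equals the canonical derivative field -/
lemma p1_eq {f : ℝ → ℝ → ℝ → ℝ} (hf : ContDiff ℝ 2 (UC f)) (t x y : ℝ) :
    p1 f t x y = DV f e1 (t, x, y) :=
  (hasD_x (UC f) ((hf.differentiable (by norm_num)) (t, x, y))).deriv

lemma p2_eq {f : ℝ → ℝ → ℝ → ℝ} (hf : ContDiff ℝ 2 (UC f)) (t x y : ℝ) :
    p2 f t x y = DV f e2 (t, x, y) :=
  (hasD_y (UC f) ((hf.differentiable (by norm_num)) (t, x, y))).deriv

lemma pt_eq {f : ℝ → ℝ → ℝ → ℝ} (hf : ContDiff ℝ 2 (UC f)) (t x y : ℝ) :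
    pt f t x y = DV f e0 (t, x, y) :=
  (hasD_t (UC f) ((hf.differentiable (by norm_num)) (t, x, y))).deriv

/-- congruence lemmas -/
lemma pt_congr {g h : ℝ → ℝ → ℝ → ℝ} (H : ∀ t x y, g t x y = h t x y) (t x y : ℝ) :
    pt g t x y = pt h t x y := by
  unfold pt; congr 1; ext s; exact H s x y
lemma p1_congr {g h : ℝ → ℝ → ℝ → ℝ} (H : ∀ t x y, g t x y = h t x y) (t x y : ℝ) :
    p1 g t x y = p1 h t x y := by
  unfold p1; congr 1; ext s; exact H t s y
lemma p2_congr {g h : ℝ → ℝ → ℝ → ℝ} (H : ∀ t x y, g t x y = h t x y) (t x y : ℝ) :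
    p2 g t x y = p2 h t x y := by
  unfold p2; congr 1; ext s; exact H t x s

lemma eta_pt {f g : ℝ → ℝ → ℝ → ℝ} (hf : ContDiff ℝ 2 (UC f)) (hg : ContDiff ℝ 2 (UC g))
    (v w : E3) {η : ℝ → ℝ → ℝ → ℝ}
    (hη : ∀ a b c, η a b c = DV f v (a, b, c) - DV g w (a, b, c)) (t x y : ℝ) :
    pt η t x y = DD f e0 v t x y - DD g e0 w t x y := by
  have h2 := hasD_t (DV f v) (t := t) (x := x) (y := y) (DV_differentiable hf v _)
  have h1 := hasD_t (DV g w) (t := t) (x := x) (y := y) (DV_differentiable hg w _)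
  have h := (h2.sub h1).deriv
  rw [fderiv_DV hf, fderiv_DV hg] at h
  calc pt η t x y = deriv (fun s => DV f v (s, x, y) - DV g w (s, x, y)) t := by
        unfold pt; congr 1; ext s; exact hη s x y
    _ = _ := h

lemma eta_p1 {f g : ℝ → ℝ → ℝ → ℝ} (hf : ContDiff ℝ 2 (UC f)) (hg : ContDiff ℝ 2 (UC g))
    (v w : E3) {η : ℝ → ℝ → ℝ → ℝ}
    (hη : ∀ a b c, η a b c = DV f v (a, b, c) - DV g w (a, b, c)) (t x y : ℝ) :
    p1 η t x y = DD f e1 v t x y - DD g e1 w t x y := by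
  have h2 := hasD_x (DV f v) (t := t) (x := x) (y := y) (DV_differentiable hf v _)
  have h1 := hasD_x (DV g w) (t := t) (x := x) (y := y) (DV_differentiable hg w _)
  have h := (h2.sub h1).deriv
  rw [fderiv_DV hf, fderiv_DV hg] at h
  calc p1 η t x y = deriv (fun s => DV f v (t, s, y) - DV g w (t, s, y)) x := by
        unfold p1; congr 1; ext s; exact hη t s y
    _ = _ := h

lemma eta_p2 {f g : ℝ → ℝ → ℝ → ℝ} (hf : ContDiff ℝ 2 (UC f)) (hg : ContDiff ℝ 2 (UC g))
    (v w : E3) {η : ℝ → ℝ → ℝ → ℝ}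
    (hη : ∀ a b c, η a b c = DV f v (a, b, c) - DV g w (a, b, c)) (t x y : ℝ) :
    p2 η t x y = DD f e2 v t x y - DD g e2 w t x y := by
  have h2 := hasD_y (DV f v) (t := t) (x := x) (y := y) (DV_differentiable hf v _)
  have h1 := hasD_y (DV g w) (t := t) (x := x) (y := y) (DV_differentiable hg w _)
  have h := (h2.sub h1).deriv
  rw [fderiv_DV hf, fderiv_DV hg] at h
  calc p2 η t x y = deriv (fun s => DV f v (t, x, s) - DV g w (t, x, s)) y := by
        unfold p2; congr 1; ext s; exact hη t x s
    _ = _ := h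

/-- product expansion of DV of a product, in any of the three directions -/
lemma DV_mul_t {a b : ℝ → ℝ → ℝ → ℝ} (ha : ContDiff ℝ 2 (UC a)) (hb : ContDiff ℝ 2 (UC b))
    (hab : ContDiff ℝ 2 (UC (fun t x y => a t x y * b t x y))) (t x y : ℝ) :
    DV (fun t x y => a t x y * b t x y) e0 (t, x, y) =
      DV a e0 (t, x, y) * b t x y + a t x y * DV b e0 (t, x, y) := by
  rw [← pt_eq hab t x y]
  exact ((hasD_t (UC a) ((ha.differentiable (by norm_num)) _)).mul
    (hasD_t (UC b) ((hb.differentiable (by norm_num)) _))).deriv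

lemma DV_mul_x {a b : ℝ → ℝ → ℝ → ℝ} (ha : ContDiff ℝ 2 (UC a)) (hb : ContDiff ℝ 2 (UC b))
    (hab : ContDiff ℝ 2 (UC (fun t x y => a t x y * b t x y))) (t x y : ℝ) :
    DV (fun t x y => a t x y * b t x y) e1 (t, x, y) =
      DV a e1 (t, x, y) * b t x y + a t x y * DV b e1 (t, x, y) := by
  rw [← p1_eq hab t x y]
  exact ((hasD_x (UC a) ((ha.differentiable (by norm_num)) _)).mul
    (hasD_x (UC b) ((hb.differentiable (by norm_num)) _))).deriv

lemma DV_mul_y {a b : ℝ → ℝ → ℝ → ℝ} (ha : ContDiff ℝ 2 (UC a)) (hb : ContDiff ℝ 2 (UC b))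
    (hab : ContDiff ℝ 2 (UC (fun t x y => a t x y * b t x y))) (t x y : ℝ) :
    DV (fun t x y => a t x y * b t x y) e2 (t, x, y) =
      DV a e2 (t, x, y) * b t x y + a t x y * DV b e2 (t, x, y) := by
  rw [← p2_eq hab t x y]
  exact ((hasD_y (UC a) ((ha.differentiable (by norm_num)) _)).mul
    (hasD_y (UC b) ((hb.differentiable (by norm_num)) _))).deriv

/-- transport equation for the momentum component m = ρ * w -/
lemma mom_m {ρ w u1 u2 Pr : ℝ → ℝ → ℝ → ℝ}
    (hρ : ContDiff ℝ 2 (UC ρ)) (hw : ContDiff ℝ 2 (UC w))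
    (v : E3)
    (htrans : ∀ a b c, DV ρ e0 (a, b, c) + u1 a b c * DV ρ e1 (a, b, c)
      + u2 a b c * DV ρ e2 (a, b, c) = 0)
    (hmom : ∀ a b c, ρ a b c * (DV w e0 (a, b, c) + u1 a b c * DV w e1 (a, b, c)
      + u2 a b c * DV w e2 (a, b, c)) + DV Pr v (a, b, c) = 0) :
    ∀ a b c, DV (fun t x y => ρ t x y * w t x y) e0 (a, b, c) =
      -(u1 a b c * DV (fun t x y => ρ t x y * w t x y) e1 (a, b, c)
        + u2 a b c * DV (fun t x y => ρ t x y * w t x y) e2 (a, b, c)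
        + DV Pr v (a, b, c)) := by
  intro a b c
  have hm : ContDiff ℝ 2 (UC (fun t x y => ρ t x y * w t x y)) := hρ.mul hw
  rw [DV_mul_t hρ hw hm, DV_mul_x hρ hw hm, DV_mul_y hρ hw hm]
  linear_combination (w a b c) * htrans a b c + hmom a b c

/-- x-derivative of the momentum transport equation -/
lemma mom_diff_x {f u1 u2 Pr : ℝ → ℝ → ℝ → ℝ}
    (hf : ContDiff ℝ 2 (UC f)) (hu1 : ContDiff ℝ 2 (UC u1)) (hu2 : ContDiff ℝ 2 (UC u2))
    (hP : ContDiff ℝ 2 (UC Pr)) (v : E3)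
    (heq : ∀ a b c, DV f e0 (a, b, c) = -(u1 a b c * DV f e1 (a, b, c)
      + u2 a b c * DV f e2 (a, b, c) + DV Pr v (a, b, c))) (t x y : ℝ) :
    DD f e1 e0 t x y = -((DV u1 e1 (t, x, y) * DV f e1 (t, x, y)
        + u1 t x y * DD f e1 e1 t x y)
      + (DV u2 e1 (t, x, y) * DV f e2 (t, x, y) + u2 t x y * DD f e1 e2 t x y)
      + DD Pr e1 v t x y) := by
  have A1 : HasDerivAt (fun s => u1 t s y) (DV u1 e1 (t, x, y)) x :=
    hasD_x (UC u1) ((hu1.differentiable (by norm_num)) _)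
  have A2 : HasDerivAt (fun s => DV f e1 (t, s, y)) (DD f e1 e1 t x y) x := by
    have h := hasD_x (DV f e1) (t := t) (x := x) (y := y) (DV_differentiable hf e1 _)
    rwa [fderiv_DV hf] at h
  have A3 : HasDerivAt (fun s => u2 t s y) (DV u2 e1 (t, x, y)) x :=
    hasD_x (UC u2) ((hu2.differentiable (by norm_num)) _)
  have A4 : HasDerivAt (fun s => DV f e2 (t, s, y)) (DD f e1 e2 t x y) x := by
    have h := hasD_x (DV f e2) (t := t) (x := x) (y := y) (DV_differentiable hf e2 _)
    rwa [fderiv_DV hf] at h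
  have A5 : HasDerivAt (fun s => DV Pr v (t, s, y)) (DD Pr e1 v t x y) x := by
    have h := hasD_x (DV Pr v) (t := t) (x := x) (y := y) (DV_differentiable hP v _)
    rwa [fderiv_DV hP] at h
  have hR := (((A1.mul A2).add (A3.mul A4)).add A5).neg
  have hL : HasDerivAt (fun s => DV f e0 (t, s, y)) (DD f e1 e0 t x y) x := by
    have h := hasD_x (DV f e0) (t := t) (x := x) (y := y) (DV_differentiable hf e0 _)
    rwa [fderiv_DV hf] at h
  have hfun : (fun s => DV f e0 (t, s, y)) =
      (fun s => -(u1 t s y * DV f e1 (t, s, y) + u2 t s y * DV f e2 (t, s, y)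
        + DV Pr v (t, s, y))) := funext fun s => heq t s y
  rw [hfun] at hL
  exact hL.unique hR

/-- y-derivative of the momentum transport equation -/
lemma mom_diff_y {f u1 u2 Pr : ℝ → ℝ → ℝ → ℝ}
    (hf : ContDiff ℝ 2 (UC f)) (hu1 : ContDiff ℝ 2 (UC u1)) (hu2 : ContDiff ℝ 2 (UC u2))
    (hP : ContDiff ℝ 2 (UC Pr)) (v : E3)
    (heq : ∀ a b c, DV f e0 (a, b, c) = -(u1 a b c * DV f e1 (a, b, c)
      + u2 a b c * DV f e2 (a, b, c) + DV Pr v (a, b, c))) (t x y : ℝ) :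
    DD f e2 e0 t x y = -((DV u1 e2 (t, x, y) * DV f e1 (t, x, y)
        + u1 t x y * DD f e2 e1 t x y)
      + (DV u2 e2 (t, x, y) * DV f e2 (t, x, y) + u2 t x y * DD f e2 e2 t x y)
      + DD Pr e2 v t x y) := by
  have A1 : HasDerivAt (fun s => u1 t x s) (DV u1 e2 (t, x, y)) y :=
    hasD_y (UC u1) ((hu1.differentiable (by norm_num)) _)
  have A2 : HasDerivAt (fun s => DV f e1 (t, x, s)) (DD f e2 e1 t x y) y := by
    have h := hasD_y (DV f e1) (t := t) (x := x) (y := y) (DV_differentiable hf e1 _)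
    rwa [fderiv_DV hf] at h
  have A3 : HasDerivAt (fun s => u2 t x s) (DV u2 e2 (t, x, y)) y :=
    hasD_y (UC u2) ((hu2.differentiable (by norm_num)) _)
  have A4 : HasDerivAt (fun s => DV f e2 (t, x, s)) (DD f e2 e2 t x y) y := by
    have h := hasD_y (DV f e2) (t := t) (x := x) (y := y) (DV_differentiable hf e2 _)
    rwa [fderiv_DV hf] at h
  have A5 : HasDerivAt (fun s => DV Pr v (t, x, s)) (DD Pr e2 v t x y) y := by
    have h := hasD_y (DV Pr v) (t := t) (x := x) (y := y) (DV_differentiable hP v _)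
    rwa [fderiv_DV hP] at h
  have hR := (((A1.mul A2).add (A3.mul A4)).add A5).neg
  have hL : HasDerivAt (fun s => DV f e0 (t, x, s)) (DD f e2 e0 t x y) y := by
    have h := hasD_y (DV f e0) (t := t) (x := x) (y := y) (DV_differentiable hf e0 _)
    rwa [fderiv_DV hf] at h
  have hfun : (fun s => DV f e0 (t, x, s)) =
      (fun s => -(u1 t x s * DV f e1 (t, x, s) + u2 t x s * DV f e2 (t, x, s)
        + DV Pr v (t, x, s))) := funext fun s => heq t x s
  rw [hfun] at hL
  exact hL.unique hR


/-- For the non-homogeneous incompressible Euler system in 2-D, the curl η of the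
momentum m = ρu satisfies ∂_t η + u·∇η = ∂_X u · u = ½ ∂_X |u|², with X = ∇^⊥ρ. -/
theorem stmt11 (ρ u1 u2 Pr : ℝ → ℝ → ℝ → ℝ)
    (hρ : ContDiff ℝ 2 (fun p : ℝ × ℝ × ℝ => ρ p.1 p.2.1 p.2.2))
    (hu1 : ContDiff ℝ 2 (fun p : ℝ × ℝ × ℝ => u1 p.1 p.2.1 p.2.2))
    (hu2 : ContDiff ℝ 2 (fun p : ℝ × ℝ × ℝ => u2 p.1 p.2.1 p.2.2))
    (hPr : ContDiff ℝ 2 (fun p : ℝ × ℝ × ℝ => Pr p.1 p.2.1 p.2.2))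
    (hpos : ∀ t x y, 0 < ρ t x y)
    (htransρ : ∀ t x y,
      pt ρ t x y + u1 t x y * p1 ρ t x y + u2 t x y * p2 ρ t x y = 0)
    (hmom1 : ∀ t x y,
      ρ t x y * (pt u1 t x y + u1 t x y * p1 u1 t x y + u2 t x y * p2 u1 t x y)
        + p1 Pr t x y = 0)
    (hmom2 : ∀ t x y,
      ρ t x y * (pt u2 t x y + u1 t x y * p1 u2 t x y + u2 t x y * p2 u2 t x y)
        + p2 Pr t x y = 0)
    (hdiv : ∀ t x y, p1 u1 t x y + p2 u2 t x y = 0)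
    (η : ℝ → ℝ → ℝ → ℝ)
    (hη : ∀ t x y, η t x y =
      p1 (fun t x y => ρ t x y * u2 t x y) t x y -
      p2 (fun t x y => ρ t x y * u1 t x y) t x y)
    (X1 X2 : ℝ → ℝ → ℝ → ℝ)
    (hX1 : ∀ t x y, X1 t x y = -(p2 ρ t x y))
    (hX2 : ∀ t x y, X2 t x y = p1 ρ t x y) :
    ∀ t x y, 0 ≤ t →
      (pt η t x y + u1 t x y * p1 η t x y + u2 t x y * p2 η t x y =
        (X1 t x y * p1 u1 t x y + X2 t x y * p2 u1 t x y) * u1 t x y +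
        (X1 t x y * p1 u2 t x y + X2 t x y * p2 u2 t x y) * u2 t x y) ∧
      ((X1 t x y * p1 u1 t x y + X2 t x y * p2 u1 t x y) * u1 t x y +
        (X1 t x y * p1 u2 t x y + X2 t x y * p2 u2 t x y) * u2 t x y =
        (1 / 2) *
          (X1 t x y * p1 (fun t a b => (u1 t a b) ^ 2 + (u2 t a b) ^ 2) t x y +
            X2 t x y * p2 (fun t a b => (u1 t a b) ^ 2 + (u2 t a b) ^ 2) t x y)) := by
  have hρ' : ContDiff ℝ 2 (UC ρ) := hρ
  have hu1' : ContDiff ℝ 2 (UC u1) := hu1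
  have hu2' : ContDiff ℝ 2 (UC u2) := hu2
  have hPr' : ContDiff ℝ 2 (UC Pr) := hPr
  have hm1 : ContDiff ℝ 2 (UC (fun t x y => ρ t x y * u1 t x y)) := hρ'.mul hu1'
  have hm2 : ContDiff ℝ 2 (UC (fun t x y => ρ t x y * u2 t x y)) := hρ'.mul hu2'
  -- hypotheses in DV form
  have htransDV : ∀ a b c, DV ρ e0 (a, b, c) + u1 a b c * DV ρ e1 (a, b, c)
      + u2 a b c * DV ρ e2 (a, b, c) = 0 := by
    intro a b c
    have h := htransρ a b c
    rwa [pt_eq hρ', p1_eq hρ', p2_eq hρ'] at h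
  have hmom1DV : ∀ a b c, ρ a b c * (DV u1 e0 (a, b, c) + u1 a b c * DV u1 e1 (a, b, c)
      + u2 a b c * DV u1 e2 (a, b, c)) + DV Pr e1 (a, b, c) = 0 := by
    intro a b c
    have h := hmom1 a b c
    rwa [pt_eq hu1', p1_eq hu1', p2_eq hu1', p1_eq hPr'] at h
  have hmom2DV : ∀ a b c, ρ a b c * (DV u2 e0 (a, b, c) + u1 a b c * DV u2 e1 (a, b, c)
      + u2 a b c * DV u2 e2 (a, b, c)) + DV Pr e2 (a, b, c) = 0 := by
    intro a b c
    have h := hmom2 a b c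
    rwa [pt_eq hu2', p1_eq hu2', p2_eq hu2', p2_eq hPr'] at h
  have hK1 := mom_m hρ' hu1' e1 htransDV hmom1DV
  have hK2 := mom_m hρ' hu2' e2 htransDV hmom2DV
  have hηDV : ∀ a b c, η a b c = DV (fun t x y => ρ t x y * u2 t x y) e1 (a, b, c)
      - DV (fun t x y => ρ t x y * u1 t x y) e2 (a, b, c) := by
    intro a b c
    rw [hη a b c, p1_eq hm2, p2_eq hm1]
  intro t x y _
  have Hpt := eta_pt hm2 hm1 e1 e2 hηDV t x y
  have Hp1 := eta_p1 hm2 hm1 e1 e2 hηDV t x y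
  have Hp2 := eta_p2 hm2 hm1 e1 e2 hηDV t x y
  have HC2 := mom_diff_x hm2 hu1' hu2' hPr' e2 hK2 t x y
  have HC1 := mom_diff_y hm1 hu1' hu2' hPr' e1 hK1 t x y
  have s1 := DD_symm hm2 e0 e1 t x y
  have s2 := DD_symm hm1 e0 e2 t x y
  have s3 := DD_symm hm2 e2 e1 t x y
  have s4 := DD_symm hm1 e1 e2 t x y
  have s5 := DD_symm hPr' e1 e2 t x y
  have E21 := DV_mul_x hρ' hu2' hm2 t x y
  have E22 := DV_mul_y hρ' hu2' hm2 t x y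
  have E11 := DV_mul_x hρ' hu1' hm1 t x y
  have E12 := DV_mul_y hρ' hu1' hm1 t x y
  have hdiv' : DV u1 e1 (t, x, y) + DV u2 e2 (t, x, y) = 0 := by
    have h := hdiv t x y
    rwa [p1_eq hu1', p2_eq hu2'] at h
  constructor
  · rw [Hpt, Hp1, Hp2, hX1, hX2, p1_eq hu1', p2_eq hu1', p1_eq hu2', p2_eq hu2',
      p1_eq hρ', p2_eq hρ']
    linear_combination s1 - s2 + HC2 - HC1 + (u2 t x y) * s3 - (u1 t x y) * s4 - s5
      + (-(DV u1 e1 (t, x, y))) * E21 + (-(DV u2 e1 (t, x, y))) * E22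
      + (DV u1 e2 (t, x, y)) * E11 + (DV u2 e2 (t, x, y)) * E12
      + (u1 t x y * DV ρ e2 (t, x, y) - u2 t x y * DV ρ e1 (t, x, y)
        + ρ t x y * (DV u1 e2 (t, x, y) - DV u2 e1 (t, x, y))) * hdiv'
  · have d1x : HasDerivAt (fun s => u1 t s y) (p1 u1 t x y) x :=
      (hasD_x (UC u1) ((hu1'.differentiable (by norm_num)) _)).differentiableAt.hasDerivAt
    have d2x : HasDerivAt (fun s => u2 t s y) (p1 u2 t x y) x :=
      (hasD_x (UC u2) ((hu2'.differentiable (by norm_num)) _)).differentiableAt.hasDerivAt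
    have d1y : HasDerivAt (fun s => u1 t x s) (p2 u1 t x y) y :=
      (hasD_y (UC u1) ((hu1'.differentiable (by norm_num)) _)).differentiableAt.hasDerivAt
    have d2y : HasDerivAt (fun s => u2 t x s) (p2 u2 t x y) y :=
      (hasD_y (UC u2) ((hu2'.differentiable (by norm_num)) _)).differentiableAt.hasDerivAt
    have hx : p1 (fun t a b => (u1 t a b) ^ 2 + (u2 t a b) ^ 2) t x y =
        2 * u1 t x y * p1 u1 t x y + 2 * u2 t x y * p1 u2 t x y := by
      have h := ((d1x.pow 2).add (d2x.pow 2)).deriv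
      unfold p1 at h ⊢
      erw [h]; norm_num
    have hy : p2 (fun t a b => (u1 t a b) ^ 2 + (u2 t a b) ^ 2) t x y =
        2 * u1 t x y * p2 u1 t x y + 2 * u2 t x y * p2 u2 t x y := by
      have h := ((d1y.pow 2).add (d2y.pow 2)).deriv
      unfold p2 at h ⊢
      erw [h]; norm_num
    rw [hx, hy]
    ring
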